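/- Every positive integer n has a unique representation n = Σ_k ε_k F_k over the Fibonacci sequence with ε_1 = 0, ε_k ∈ {0,1}, only finitely many ε_k nonzero, and ε_k = 1 implying ε_{k+1} = 0 (Zeckendorf's theorem). -/

import Mathlib

/-- Lucas sequence: K 1 = 1, K 2 = 3, K (k+2) = K (k+1) + K k. -/
def lucas : ℕ → ℕ
  | 0 => 2
  | 1 => 1
  | n + 2 => lucas (n + 1) + lucas n

/-- The Chung–Graham rule of expansion for even interval `d`,
with `A = lucas d - 1` and `B = Nat.fib (2 + d) - 1`.
Sequences are indexed from 1 (so `ε 0 = 0`) and finitely supported. -/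
def CGRule (d : ℕ) (ε : ℕ → ℕ) : Prop :=
  ε 0 = 0 ∧
  {k | ε k ≠ 0}.Finite ∧
  ε 1 ≤ Nat.fib (2 + d) - 1 ∧
  (∀ k, 2 ≤ k → ε k ≤ lucas d - 1) ∧
  (∀ m, 2 ≤ m → ε m = lucas d - 1 →
    (∀ k, 2 ≤ k → k ≤ m - 1 → ε k = lucas d - 1 - 1) →
    ε 1 < Nat.fib (2 + d) - 1) ∧
  (∀ k j, 2 ≤ k → k < j → ε k = lucas d - 1 → ε j = lucas d - 1 →
    ∃ c, k < c ∧ c < j ∧ ε c ≤ lucas d - 1 - 2)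

/-- Lexicographic-from-the-right strict order on coefficient sequences. -/
def CGlt (ε τ : ℕ → ℕ) : Prop :=
  ∃ ℓ, ε ℓ < τ ℓ ∧ ∀ k, ℓ < k → ε k = τ k

private lemma zeck_key (ε : ℕ → ℕ) (h0 : ε 0 = 0) (h1 : ε 1 = 0)
    (hfin : {k | ε k ≠ 0}.Finite) (hle : ∀ k, ε k ≤ 1)
    (hcons : ∀ k, ε k = 1 → ε (k + 1) = 0) :
    ∃ l : List ℕ, List.IsZeckendorfRep l ∧
      (∑ᶠ k, ε k * Nat.fib k) = (l.map Nat.fib).sum ∧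
      (∀ k, ε k = if k ∈ l then 1 else 0) := by
  classical
  set s : Finset ℕ := hfin.toFinset with hs
  have hmem : ∀ k, k ∈ s ↔ ε k ≠ 0 := fun k => hfin.mem_toFinset
  have hone : ∀ k ∈ s, ε k = 1 := by
    intro k hk
    have := (hmem k).1 hk
    have := hle k
    omega
  refine ⟨s.sort (· ≥ ·), ?_, ?_, ?_⟩
  · -- IsZeckendorfRep
    have hsorted : (s.sort (· ≥ ·)).Pairwise (· ≥ ·) := Finset.pairwise_sort _ _
    have hnd : (s.sort (· ≥ ·)).Nodup := Finset.sort_nodup _ _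
    have hpw : (s.sort (· ≥ ·)).Pairwise (fun a b => b + 2 ≤ a) := by
      refine List.Pairwise.imp_of_mem ?_ (List.Pairwise.and hsorted hnd)
      intro a b ha hb hab
      simp only [Finset.mem_sort] at ha hb
      have ha' := (hmem a).1 ha
      have hb' := (hmem b).1 hb
      have hne : a ≠ b + 1 := by
        intro h
        have := hcons b (hone b hb)
        rw [← h] at this
        exact ha' this
      omega
    have hge2 : ∀ a ∈ s.sort (· ≥ ·), 2 ≤ a := by
      intro a ha
      simp only [Finset.mem_sort] at ha
      have ha' := (hmem a).1 ha
      rcases a with _ | _ | a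
      · exact absurd h0 ha'
      · exact absurd h1 ha'
      · omega
    rw [List.IsZeckendorfRep]
    refine List.Pairwise.isChain ?_
    rw [List.pairwise_append]
    refine ⟨hpw, List.pairwise_singleton _ _, ?_⟩
    intro a ha b hb
    simp only [List.mem_singleton] at hb
    subst hb
    simpa using hge2 a ha
  · -- sum
    have hsupp : (Function.support fun k => ε k * Nat.fib k) ⊆ ↑s := by
      intro k hk
      simp only [Function.mem_support, ne_eq] at hk
      rw [Finset.mem_coe, hmem]
      intro h; exact hk (by simp [h])
    rw [finsum_eq_sum_of_support_subset _ hsupp]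
    have : ∑ k ∈ s, ε k * Nat.fib k = ∑ k ∈ s, Nat.fib k := by
      refine Finset.sum_congr rfl fun k hk => ?_
      rw [hone k hk, one_mul]
    rw [this]
    have hperm : List.Perm ((s.sort (· ≥ ·)).map Nat.fib) (s.toList.map Nat.fib) :=
      (Finset.sort_perm_toList _ _).map _
    rw [hperm.sum_eq]
    rw [← Finset.sum_map_toList]
  · intro k
    simp only [Finset.mem_sort]
    by_cases hk : k ∈ s
    · simp [hk, hone k hk]
    · have := (hmem k).not_left.1 hk
      simp [hk, this]

private local instance : IsTrans ℕ fun a b ↦ b + 2 ≤ a where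
  trans _a _b _c hba hcb := hcb.trans <| le_self_add.trans hba

private lemma zeck_pairwise (n : ℕ) :
    ((Nat.zeckendorf n) ++ [0]).Pairwise (fun a b => b + 2 ≤ a) := by
  have := Nat.isZeckendorfRep_zeckendorf n
  rw [List.IsZeckendorfRep] at this
  exact List.isChain_iff_pairwise.mp this

theorem stmt_18 (n : ℕ) (hn : 1 ≤ n) :
    ∃! ε : ℕ → ℕ,
      ε 0 = 0 ∧ ε 1 = 0 ∧
      {k | ε k ≠ 0}.Finite ∧
      (∀ k, ε k ≤ 1) ∧
      (∀ k, ε k = 1 → ε (k + 1) = 0) ∧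
      n = ∑ᶠ k, ε k * Nat.fib k := by
  classical
  set l0 : List ℕ := Nat.zeckendorf n with hl0
  have hpw0 := zeck_pairwise n
  rw [List.pairwise_append] at hpw0
  obtain ⟨hpw, -, hge⟩ := hpw0
  have hge2 : ∀ a ∈ l0, 2 ≤ a := by
    intro a ha
    simpa using hge a ha 0 (List.mem_singleton_self 0)
  have hnd : l0.Nodup := hpw.imp (fun {a b} h => by omega)
  have hnoc : ∀ k, k ∈ l0 → k + 1 ∉ l0 := by
    intro k hk hk1
    have hsym : l0.Pairwise (fun a b => b + 2 ≤ a ∨ a + 2 ≤ b) :=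
      hpw.imp fun {a b} h => Or.inl h
    haveI : Std.Symm (fun a b : ℕ => b + 2 ≤ a ∨ a + 2 ≤ b) := ⟨fun a b h => h.symm⟩
    have := hsym.forall hk hk1 (by omega)
    omega
  set ε0 : ℕ → ℕ := fun k => if k ∈ l0 then 1 else 0 with hε0
  have hind : ∀ k, k ∈ l0 → ε0 k = 1 := fun k hk => by simp [hε0, hk]
  have h0 : ε0 0 = 0 := by
    have : (0 : ℕ) ∉ l0 := fun h => by have := hge2 0 h; omega
    simp [hε0, this]
  have h1 : ε0 1 = 0 := by
    have : (1 : ℕ) ∉ l0 := fun h => by have := hge2 1 h; omega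
    simp [hε0, this]
  have hfin : {k | ε0 k ≠ 0}.Finite := by
    refine Set.Finite.subset l0.toFinset.finite_toSet ?_
    intro k hk
    simp only [Set.mem_setOf_eq, hε0] at hk
    by_contra h
    simp only [Finset.mem_coe, List.mem_toFinset] at h
    simp [h] at hk
  have hle : ∀ k, ε0 k ≤ 1 := by intro k; simp only [hε0]; split <;> omega
  have hcons : ∀ k, ε0 k = 1 → ε0 (k + 1) = 0 := by
    intro k hk
    have hkmem : k ∈ l0 := by
      by_contra h; simp [hε0, h] at hk
    simp [hε0, hnoc k hkmem]
  have hsum : n = ∑ᶠ k, ε0 k * Nat.fib k := by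
    have hsupp : (Function.support fun k => ε0 k * Nat.fib k) ⊆ ↑l0.toFinset := by
      intro k hk
      simp only [Function.mem_support, ne_eq] at hk
      simp only [Finset.mem_coe, List.mem_toFinset]
      by_contra h
      simp [hε0, h] at hk
    rw [finsum_eq_sum_of_support_subset _ hsupp]
    have : ∑ k ∈ l0.toFinset, ε0 k * Nat.fib k = ∑ k ∈ l0.toFinset, Nat.fib k := by
      refine Finset.sum_congr rfl fun k hk => ?_
      rw [hind k (List.mem_toFinset.mp hk), one_mul]
    rw [this, List.sum_toFinset _ hnd, hl0, Nat.sum_zeckendorf_fib]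
  refine ⟨ε0, ⟨h0, h1, hfin, hle, hcons, hsum⟩, ?_⟩
  rintro τ ⟨t0, t1, tfin, tle, tcons, tsum⟩
  obtain ⟨l, hrep, hsumeq, hindτ⟩ := zeck_key τ t0 t1 tfin tle tcons
  have hl : l = l0 := by
    rw [hl0]
    have : n = (l.map Nat.fib).sum := by rw [tsum, hsumeq]
    rw [this, Nat.zeckendorf_sum_fib hrep]
  funext k
  rw [hindτ k, hl, hε0]
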